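/- Let G be a group, R an integral domain, ρ : G → GL(l, R) a representation, φ : G → ℤⁿ a surjective homomorphism, and C_* a bounded chain complex of finitely generated free right ℤ[G]-modules. Then for every k and every group homomorphism p : ℤⁿ → ℤᵐ one has b_k(C_*, ρ; p) ≥ b_k°(C_*, ρ), and also b_k(C_*, ρ) ≥ b_k°(C_*, ρ). -/

import Mathlib

open Matrix

section RankLemmas

lemma myrank_submatrix_le {K : Type} [Field K] {m n : Type} [Fintype m] [Fintype n]
    [DecidableEq m] [DecidableEq n] {r s : ℕ}
    (A : Matrix m n K) (f : Fin r → m) (g : Fin s → n) :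
    (A.submatrix f g).rank ≤ A.rank := by
  have h1 : A.submatrix f g =
      ((1 : Matrix m m K).submatrix f (Equiv.refl m)) * (A.submatrix id g) := by
    rw [one_submatrix_mul]
    simp [submatrix_submatrix]
  have h2 : A.submatrix id g =
      A * ((1 : Matrix n n K).submatrix (Equiv.refl n) g) := by
    rw [mul_submatrix_one]
    simp
  calc (A.submatrix f g).rank ≤ (A.submatrix id g).rank := by
        rw [h1]; exact rank_mul_le_right _ _
    _ ≤ A.rank := by rw [h2]; exact rank_mul_le_left _ _

lemma exists_li_cols {K : Type} [Field K] {m n : Type} [Fintype m] [Fintype n]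
    (A : Matrix m n K) {r : ℕ} (hr : A.rank = r) :
    ∃ g : Fin r → n, LinearIndependent K (fun j => Aᵀ (g j)) := by
  obtain ⟨s, hsub, hspan, hli⟩ := exists_linearIndependent K (Set.range Aᵀ)
  have hfin : s.Finite := (Set.finite_range Aᵀ).subset hsub
  haveI := hfin.fintype
  have hcard : Fintype.card s = r := by
    rw [← hr, rank_eq_finrank_span_cols, Matrix.col, ← hspan]
    rw [finrank_span_set_eq_card hli, Set.toFinset_card]
  let e : Fin r ≃ s := (Fintype.equivFinOfCardEq hcard).symm
  have hmem : ∀ j : Fin r, ((e j : m → K)) ∈ Set.range Aᵀ := fun j => hsub (e j).2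
  choose g hg using hmem
  refine ⟨g, ?_⟩
  have : (fun j => Aᵀ (g j)) = (fun x : s => (x : m → K)) ∘ e := by
    funext j; exact hg j
  rw [this]
  exact hli.comp e e.injective

lemma exists_isUnit_submatrix {K : Type} [Field K] {m n : Type} [Fintype m] [Fintype n]
    [DecidableEq m] [DecidableEq n] (A : Matrix m n K)
    {r : ℕ} (hr : A.rank = r) :
    ∃ (f : Fin r → m) (g : Fin r → n), IsUnit (A.submatrix f g) := by
  obtain ⟨g, hg⟩ := exists_li_cols A hr
  set B : Matrix m (Fin r) K := A.submatrix id g with hB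
  have hBcols : Bᵀ = fun j => Aᵀ (g j) := by
    funext j i; rfl
  have hBrank : B.rank = r := by
    rw [rank_eq_finrank_span_cols, Matrix.col, hBcols, finrank_span_eq_card hg, Fintype.card_fin]
  have hBt : Bᵀ.rank = r := by rw [rank_transpose]; exact hBrank
  obtain ⟨f, hf⟩ := exists_li_cols Bᵀ hBt
  refine ⟨f, g, ?_⟩
  have hrows : (fun j => (A.submatrix f g) j) = fun j => Bᵀᵀ (f j) := by
    funext j i; rfl
  rw [← linearIndependent_rows_iff_isUnit]
  exact hf

lemma rank_map_map_le {S S' : Type} [CommRing S] [IsDomain S] [CommRing S'] [IsDomain S']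
    (f : S →+* S') {m n : Type} [Fintype m] [Fintype n] [DecidableEq m] [DecidableEq n]
    (A : Matrix m n S) :
    ((A.map ⇑f).map ⇑(algebraMap S' (FractionRing S'))).rank ≤
      (A.map ⇑(algebraMap S (FractionRing S))).rank := by
  obtain ⟨u, v, huv⟩ :=
    exists_isUnit_submatrix ((A.map ⇑f).map ⇑(algebraMap S' (FractionRing S'))) rfl
  rw [isUnit_iff_isUnit_det, isUnit_iff_ne_zero] at huv
  have key : ∀ (T T' : Type) (_ : CommRing T) (_ : CommRing T') (g : T →+* T')
      (M : Matrix m n T)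
      (u' : Fin (((A.map ⇑f).map ⇑(algebraMap S' (FractionRing S'))).rank) → m) v',
      ((M.map ⇑g).submatrix u' v').det = g ((M.submatrix u' v').det) := by
    intro T T' _ _ g M u' v'
    rw [RingHom.map_det]
    congr 1
  have h1 : (((A.map ⇑f).map ⇑(algebraMap S' (FractionRing S'))).submatrix u v).det
      = (algebraMap S' (FractionRing S')) (f ((A.submatrix u v).det)) := by
    rw [key S' (FractionRing S') _ _ (algebraMap S' (FractionRing S')) (A.map ⇑f) u v,
      key S S' _ _ f A u v]
  have hdetA : (A.submatrix u v).det ≠ 0 := by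
    intro h
    rw [h1, h, map_zero, map_zero] at huv
    exact huv rfl
  have h2 : (((A.map ⇑(algebraMap S (FractionRing S))).submatrix u v)).det ≠ 0 := by
    rw [key S (FractionRing S) _ _ (algebraMap S (FractionRing S)) A u v]
    intro h
    exact hdetA (IsFractionRing.injective S (FractionRing S) (by rwa [map_zero]))
  have hunit : IsUnit ((A.map ⇑(algebraMap S (FractionRing S))).submatrix u v) := by
    rw [isUnit_iff_isUnit_det]; exact h2.isUnit
  calc ((A.map ⇑f).map ⇑(algebraMap S' (FractionRing S'))).rank
      = ((A.map ⇑(algebraMap S (FractionRing S))).submatrix u v).rank := by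
        rw [rank_of_isUnit _ hunit, Fintype.card_fin]
    _ ≤ (A.map ⇑(algebraMap S (FractionRing S))).rank := myrank_submatrix_le _ u v

end RankLemmas


/-- A finite free chain complex `0 ← C_0 ← C_1 ← ⋯ ← C_N ← 0` over a ring `T`,
recorded by the ranks `c k` of its finitely generated free chain modules and the
matrices of its boundary operators; `d k` is the matrix of `∂_{k+1} : C_{k+1} → C_k`. -/
structure FinFreeChainComplex (T : Type) [Ring T] where
  N : ℕ
  c : ℕ → ℕ
  bounded : ∀ k : ℕ, N < k → c k = 0
  d : ∀ k : ℕ, Matrix (Fin (c k)) (Fin (c (k + 1))) T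
  dsq : ∀ k : ℕ, d k * d (k + 1) = 0

/-- The rank, over the fraction field `{U}` of `U`, of the matrix of `∂_{k+1}`
with entries mapped by the ring homomorphism `φ : T →+* U`. -/
noncomputable def FinFreeChainComplex.bdryRank {T U : Type} [Ring T] [CommRing U]
    (C : FinFreeChainComplex T) (φ : T →+* U) (k : ℕ) : ℕ :=
  ((C.d k).map ⇑((algebraMap U (FractionRing U)).comp φ)).rank

/-- The rank, over `{U}`, of the matrix of `∂_k : C_k → C_{k-1}` (with `∂_0 = 0`)
with entries mapped by `φ`. -/
noncomputable def FinFreeChainComplex.bdryRankAt {T U : Type} [Ring T] [CommRing U]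
    (C : FinFreeChainComplex T) (φ : T →+* U) (k : ℕ) : ℕ :=
  match k with
  | 0 => 0
  | k' + 1 => C.bdryRank φ k'

/-- `b_k(C_*, φ) = dim_{{U}} H_k(C_* ⊗_φ {U}) = c_k − rk φ(∂_k) − rk φ(∂_{k+1})`. -/
noncomputable def FinFreeChainComplex.bettiMap {T U : Type} [Ring T] [CommRing U]
    (C : FinFreeChainComplex T) (φ : T →+* U) (k : ℕ) : ℕ :=
  C.c k - C.bdryRankAt φ k - C.bdryRank φ k

/-- `b_k(C_*) = dim_{{T}} H_k(C_* ⊗_T {T})`. -/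
noncomputable def FinFreeChainComplex.betti {T : Type} [CommRing T]
    (C : FinFreeChainComplex T) (k : ℕ) : ℕ :=
  C.bettiMap (RingHom.id T) k


/-- Flattening of a block matrix: a matrix of `l × l` matrices becomes an ordinary matrix. -/
def blockFlatten {a b l : ℕ} {S : Type}
    (M : Matrix (Fin a) (Fin b) (Matrix (Fin l) (Fin l) S)) :
    Matrix (Fin a × Fin l) (Fin b × Fin l) S :=
  Matrix.of fun ik jl => M ik.1 jl.1 ik.2 jl.2

/-- The ring homomorphism `ℤ[G] → Mat_l(S)` induced by a representation
`τ : G →* GL(l, S)`. -/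
noncomputable def reprMatRingHom {G : Type} [Group G] {l : ℕ} {S : Type} [CommRing S]
    (τ : G →* GL (Fin l) S) : MonoidAlgebra ℤ G →+* Matrix (Fin l) (Fin l) S :=
  ((MonoidAlgebra.lift ℤ (Matrix (Fin l) (Fin l) S) G)
    ((Units.coeHom (Matrix (Fin l) (Fin l) S)).comp τ)).toRingHom

/-- The rank over the fraction field `{S}` of the matrix of `∂_{k+1} ⊗ 1` in the
complex `C_* ⊗_{ℤ[G], τ} {S}^l`. -/
noncomputable def reprBdryRank {G : Type} [Group G] {l : ℕ} {S : Type} [CommRing S]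
    (C : FinFreeChainComplex (MonoidAlgebra ℤ G)) (τ : G →* GL (Fin l) S) (k : ℕ) : ℕ :=
  ((blockFlatten ((C.d k).map ⇑(reprMatRingHom τ))).map
    ⇑(algebraMap S (FractionRing S))).rank

/-- The rank over `{S}` of the matrix of `∂_k ⊗ 1` (with `∂_0 = 0`). -/
noncomputable def reprBdryRankAt {G : Type} [Group G] {l : ℕ} {S : Type} [CommRing S]
    (C : FinFreeChainComplex (MonoidAlgebra ℤ G)) (τ : G →* GL (Fin l) S) (k : ℕ) : ℕ :=
  match k with
  | 0 => 0
  | k' + 1 => reprBdryRank C τ k'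

/-- `b_k(C_*, τ) = dim_{{S}} H_k(C_* ⊗_{ℤ[G], τ} {S}^l)` for a representation
`τ : G →* GL(l, S)` into an integral domain `S`. -/
noncomputable def reprBetti {G : Type} [Group G] {l : ℕ} {S : Type} [CommRing S]
    (C : FinFreeChainComplex (MonoidAlgebra ℤ G)) (τ : G →* GL (Fin l) S) (k : ℕ) : ℕ :=
  C.c k * l - reprBdryRankAt C τ k - reprBdryRank C τ k

/-- The homomorphism `GL(l, S) →* GL(l, S')` induced by a ring homomorphism `S →+* S'`. -/
def glMap {l : ℕ} {S S' : Type} [CommRing S] [CommRing S'] (f : S →+* S') :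
    GL (Fin l) S →* GL (Fin l) S' :=
  Units.map f.mapMatrix.toMonoidHom


lemma reprMatRingHom_comp {G : Type} [Group G] {l : ℕ} {S S' : Type} [CommRing S] [CommRing S']
    (f : S →+* S') (τ : G →* GL (Fin l) S) :
    reprMatRingHom ((glMap f).comp τ) = f.mapMatrix.comp (reprMatRingHom τ) := by
  apply MonoidAlgebra.ringHom_ext
  · intro b
    simp [reprMatRingHom, MonoidAlgebra.lift_single]
  · intro a
    simp [reprMatRingHom, MonoidAlgebra.lift_single, glMap]

lemma blockFlatten_map {a b l : ℕ} {S S' : Type} [CommRing S] [CommRing S'] (f : S →+* S')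
    (M : Matrix (Fin a) (Fin b) (Matrix (Fin l) (Fin l) S)) :
    blockFlatten (M.map ⇑(f.mapMatrix)) = (blockFlatten M).map ⇑f := rfl

lemma reprBdryRank_comp_le {G : Type} [Group G] {l : ℕ} {S S' : Type}
    [CommRing S] [IsDomain S] [CommRing S'] [IsDomain S'] (f : S →+* S')
    (τ : G →* GL (Fin l) S) (C : FinFreeChainComplex (MonoidAlgebra ℤ G)) (k : ℕ) :
    reprBdryRank C ((glMap f).comp τ) k ≤ reprBdryRank C τ k := by
  unfold reprBdryRank
  rw [reprMatRingHom_comp, RingHom.coe_comp, ← Matrix.map_map, blockFlatten_map]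
  exact rank_map_map_le f _

lemma reprBetti_comp_ge {G : Type} [Group G] {l : ℕ} {S S' : Type}
    [CommRing S] [IsDomain S] [CommRing S'] [IsDomain S'] (f : S →+* S')
    (τ : G →* GL (Fin l) S) (C : FinFreeChainComplex (MonoidAlgebra ℤ G)) (k : ℕ) :
    reprBetti C τ k ≤ reprBetti C ((glMap f).comp τ) k := by
  have h1 : reprBdryRank C ((glMap f).comp τ) k ≤ reprBdryRank C τ k :=
    reprBdryRank_comp_le f τ C k
  have h0 : reprBdryRankAt C ((glMap f).comp τ) k ≤ reprBdryRankAt C τ k := by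
    cases k with
    | zero => exact le_refl _
    | succ k' => exact reprBdryRank_comp_le f τ C k'
  exact tsub_le_tsub (tsub_le_tsub_left h0 _) h1

/-- for a representation `ρ : G → GL(l, R)` over an integral domain `R`,
a surjection `φ : G → ℤⁿ`, the twisted representation `ρ° : G → GL(l, R[ℤⁿ])`,
`ρ°(g) = φ(g)·ρ(g)`, and any `p : ℤⁿ → ℤᵐ` with `ρ_p = (R[p]) ∘ ρ°`, one has
`b_k(C_*, ρ; p) ≥ b_k°(C_*, ρ)` and `b_k(C_*, ρ) ≥ b_k°(C_*, ρ)` for every `k`. -/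
theorem reprBetti_ge_generic
    {G : Type} [Group G] {R : Type} [CommRing R] [IsDomain R] {n l : ℕ}
    (ρ : G →* GL (Fin l) R)
    (φ : G →* Multiplicative (Fin n → ℤ)) (hφ : Function.Surjective φ)
    (ρO : G →* GL (Fin l) (AddMonoidAlgebra R (Fin n → ℤ)))
    (hρO : ∀ g : G, (ρO g : Matrix (Fin l) (Fin l) (AddMonoidAlgebra R (Fin n → ℤ))) =
      AddMonoidAlgebra.single (Multiplicative.toAdd (φ g)) (1 : R) •
        ((ρ g : Matrix (Fin l) (Fin l) R).map
          ⇑(algebraMap R (AddMonoidAlgebra R (Fin n → ℤ)))))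
    (C : FinFreeChainComplex (MonoidAlgebra ℤ G)) (k : ℕ) :
    (∀ (m : ℕ) (p : (Fin n → ℤ) →+ (Fin m → ℤ)),
      reprBetti C ρO k ≤
        reprBetti C ((glMap (AddMonoidAlgebra.mapDomainRingHom R p)).comp ρO) k) ∧
    reprBetti C ρO k ≤ reprBetti C ρ k := by
  haveI hdom : IsDomain (AddMonoidAlgebra R (Fin n → ℤ)) := NoZeroDivisors.to_isDomain _
  -- the augmentation `ε : R[ℤⁿ] →+* R`
  let ε : AddMonoidAlgebra R (Fin n → ℤ) →+* R :=
    ((AddMonoidAlgebra.lift R R (Fin n → ℤ)) 1).toRingHom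
  have hε_single : ∀ a : Fin n → ℤ, ε (AddMonoidAlgebra.single a (1 : R)) = 1 := by
    intro a
    simp [ε, AddMonoidAlgebra.lift_single]
  have hε_alg : ∀ r : R, ε (algebraMap R (AddMonoidAlgebra R (Fin n → ℤ)) r) = r := by
    intro r
    exact ((AddMonoidAlgebra.lift R R (Fin n → ℤ)) 1).commutes r
  have hεmat : ∀ g : G, ε.mapMatrix (ρO g : Matrix (Fin l) (Fin l) (AddMonoidAlgebra R (Fin n → ℤ)))
      = (ρ g : Matrix (Fin l) (Fin l) R) := by
    intro g
    ext i j
    rw [hρO g]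
    simp only [RingHom.mapMatrix_apply, Matrix.map_apply, Matrix.smul_apply, smul_eq_mul, _root_.map_mul,
      hε_single, one_mul]
    exact hε_alg _
  have hcompρ : reprMatRingHom ρ = ε.mapMatrix.comp (reprMatRingHom ρO) := by
    apply MonoidAlgebra.ringHom_ext
    · intro b
      simp [reprMatRingHom, MonoidAlgebra.lift_single]
    · intro a
      simp only [reprMatRingHom, AlgHom.toRingHom_eq_coe, RingHom.coe_coe,
        MonoidAlgebra.lift_single, one_smul, RingHom.coe_comp, Function.comp_apply]
      exact (hεmat a).symm
  have hρ_rank : ∀ j : ℕ, reprBdryRank C ρ j ≤ reprBdryRank C ρO j := by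
    intro j
    unfold reprBdryRank
    rw [hcompρ, RingHom.coe_comp, ← Matrix.map_map, blockFlatten_map]
    exact rank_map_map_le ε _
  refine ⟨?_, ?_⟩
  · intro m p
    haveI hdom' : IsDomain (AddMonoidAlgebra R (Fin m → ℤ)) := NoZeroDivisors.to_isDomain _
    exact reprBetti_comp_ge (AddMonoidAlgebra.mapDomainRingHom R p) ρO C k
  · have h0 : reprBdryRankAt C ρ k ≤ reprBdryRankAt C ρO k := by
      cases k with
      | zero => exact le_refl _
      | succ k' => exact hρ_rank k'
    exact tsub_le_tsub (tsub_le_tsub_left h0 _) (hρ_rank k)
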